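/- Let G be a simple graph on n ≥ 2 vertices with Laplacian L, let P = I − (n−1)^{−1}·L, and let K be geometrically distributed with success probability 1/n, i.e. Pr{K=k} = (1/n)(1−1/n)^k for k ≥ 0. Then the matrix series Σ_{k≥0} Pr{K=k}·P^k converges and equals (I + L)^{−1}. -/

import Mathlib

open Matrix Finset

attribute [local instance] Matrix.linftyOpNormedRing Matrix.linftyOpNormedAlgebra

section Aux

variable {n : ℕ} (hn : 2 ≤ n) (G : SimpleGraph (Fin n)) [DecidableRel G.Adj]

lemma lapMatrix_row_sum (i : Fin n) : ∑ j, G.lapMatrix ℝ i j = 0 := by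
  have h := congrFun (G.lapMatrix_mulVec_const_eq_zero (R := ℝ)) i
  simpa [Matrix.mulVec, dotProduct] using h

lemma lapMatrix_apply' (i j : Fin n) :
    G.lapMatrix ℝ i j = (if i = j then (G.degree i : ℝ) else 0)
      - (if G.Adj i j then 1 else 0) := by
  simp [SimpleGraph.lapMatrix, SimpleGraph.degMatrix, Matrix.diagonal]

end Aux

theorem random_walk_geometric_eq_forest_matrix {n : ℕ} (hn : 2 ≤ n)
    (G : SimpleGraph (Fin n)) [DecidableRel G.Adj] :
    HasSum
      (fun k : ℕ =>
        ((1 / (n : ℝ)) * (1 - 1 / (n : ℝ)) ^ k) •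
          (1 - ((n : ℝ) - 1)⁻¹ • G.lapMatrix ℝ) ^ k)
      (1 + G.lapMatrix ℝ)⁻¹ := by
  have hn0 : (0:ℝ) < (n:ℝ) := by positivity
  have hn0' : (n:ℝ) ≠ 0 := ne_of_gt hn0
  have hn1 : (0:ℝ) < (n:ℝ) - 1 := by
    have : (2:ℝ) ≤ (n:ℝ) := by exact_mod_cast hn
    linarith
  have hn1' : ((n:ℝ) - 1) ≠ 0 := ne_of_gt hn1
  set L : Matrix (Fin n) (Fin n) ℝ := G.lapMatrix ℝ with hL
  set P : Matrix (Fin n) (Fin n) ℝ := 1 - ((n : ℝ) - 1)⁻¹ • L with hP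
  -- entries of P are nonnegative
  have hPentry : ∀ i j, 0 ≤ P i j := by
    intro i j
    rw [hP]
    simp only [Matrix.sub_apply, Matrix.smul_apply, Matrix.one_apply, smul_eq_mul]
    rw [hL, lapMatrix_apply']
    by_cases hij : i = j
    · subst hij
      rw [if_pos rfl, if_pos rfl, if_neg (G.irrefl), sub_zero]
      have hdeg : (G.degree i : ℝ) ≤ (n:ℝ) - 1 := by
        have h1 : G.degree i + 1 ≤ n := by
          have := G.degree_lt_card_verts i
          rwa [Fintype.card_fin] at this
        have h2 : (G.degree i : ℝ) + 1 ≤ (n:ℝ) := by exact_mod_cast h1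
        linarith
      have : ((n:ℝ)-1)⁻¹ * (G.degree i : ℝ) ≤ ((n:ℝ)-1)⁻¹ * ((n:ℝ)-1) :=
        mul_le_mul_of_nonneg_left hdeg (by positivity)
      rw [inv_mul_cancel₀ hn1'] at this
      linarith
    · rw [if_neg hij, if_neg hij]
      by_cases hadj : G.Adj i j
      · rw [if_pos hadj]
        have h3 : (0:ℝ) - ((n:ℝ)-1)⁻¹ * (0 - 1) = ((n:ℝ)-1)⁻¹ := by ring
        rw [h3]
        positivity
      · rw [if_neg hadj]
        simp
  -- row sums of P are 1
  have hProw : ∀ i, ∑ j, P i j = 1 := by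
    intro i
    rw [hP]
    simp only [Matrix.sub_apply, Matrix.smul_apply, Matrix.one_apply, smul_eq_mul]
    rw [Finset.sum_sub_distrib, ← Finset.mul_sum, lapMatrix_row_sum]
    simp
  have hPnorm : ‖P‖ ≤ 1 := by
    rw [Matrix.linfty_opNorm_def]
    have : ((Finset.univ : Finset (Fin n)).sup fun i => ∑ j, ‖P i j‖₊) ≤ 1 := by
      apply Finset.sup_le
      intro i _
      rw [← NNReal.coe_le_coe]
      push_cast
      calc (∑ j, (‖P i j‖₊ : ℝ)) = ∑ j, P i j := by
            refine Finset.sum_congr rfl fun j _ => ?_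
            rw [coe_nnnorm, Real.norm_eq_abs, abs_of_nonneg (hPentry i j)]
        _ = 1 := hProw i
        _ ≤ 1 := le_refl 1
    exact_mod_cast this
  set x : Matrix (Fin n) (Fin n) ℝ := (1 - 1/(n:ℝ)) • P with hx
  have hc0 : 0 ≤ 1 - 1/(n:ℝ) := by
    have : 1/(n:ℝ) ≤ 1 := by
      rw [div_le_one hn0]; exact_mod_cast Nat.one_le_of_lt hn
    linarith
  have hxnorm : ‖x‖ < 1 := by
    rw [hx, norm_smul, Real.norm_eq_abs, abs_of_nonneg hc0]
    have h1 : 1 - 1/(n:ℝ) < 1 := by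
      have : 0 < 1/(n:ℝ) := by positivity
      linarith
    calc (1 - 1/(n:ℝ)) * ‖P‖ ≤ (1 - 1/(n:ℝ)) * 1 :=
          mul_le_mul_of_nonneg_left hPnorm hc0
      _ < 1 := by rw [mul_one]; exact h1
  -- key algebraic identity
  have hkey : (1 : Matrix (Fin n) (Fin n) ℝ) - x = (1/(n:ℝ)) • (1 + L) := by
    rw [hx, hP, smul_sub, smul_smul, smul_add]
    have h1 : (1 - 1/(n:ℝ)) * ((n:ℝ) - 1)⁻¹ = 1/(n:ℝ) := by
      field_simp
    rw [h1]
    have h2 : (1 - 1/(n:ℝ)) • (1 : Matrix (Fin n) (Fin n) ℝ)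
        = 1 - (1/(n:ℝ)) • 1 := by
      rw [sub_smul, one_smul]
    rw [h2]
    abel
  have hsum := hasSum_geom_series_inverse x hxnorm
  have hsum2 := hsum.const_smul (1/(n:ℝ))
  have hinv : (1 + L)⁻¹ = (1/(n:ℝ)) • Ring.inverse (1 - x) := by
    apply Matrix.inv_eq_right_inv
    have hunit : IsUnit ((1 : Matrix (Fin n) (Fin n) ℝ) - x) :=
      (Units.oneSub x hxnorm).isUnit
    have hcancel : ((1 : Matrix (Fin n) (Fin n) ℝ) - x) * Ring.inverse (1 - x) = 1 :=
      Ring.mul_inverse_cancel _ hunit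
    have h1L : (1 + L) = (n:ℝ) • ((1 : Matrix (Fin n) (Fin n) ℝ) - x) := by
      rw [hkey, smul_smul]
      rw [mul_one_div, div_self hn0', one_smul]
    rw [h1L, Matrix.mul_smul, Matrix.smul_mul, hcancel, smul_smul]
    rw [one_div, inv_mul_cancel₀ hn0', one_smul]
  rw [hinv]
  convert hsum2 using 2 with k
  · rfl
  · rfl
  rw [hx, smul_pow, smul_smul]
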